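/- Let r1, k1, r2, k2, p, b, q1, q2, E, e > 0, m ∈ (0,1), and S > 0. Define y1 = (q2·k2·r1·(k1−S)·(1+b·(1−m)·S) − q1·k1·k2·(r2 + (r2·b + e·p)·(1−m)·S)) / (q2·k1·k2·p·(1−m) − q1·k1·r2·(1+b·(1−m)·S)), assuming the denominator is nonzero. Write F1(S,y1) and F2(S,y1) for the values of the non-harvesting and harvesting vector fields at (S, y1), and set λ = (first component of F2(S,y1)) / (first component of F2(S,y1) − first component of F1(S,y1)), assuming this denominator is nonzero (it equals −q1·E·S ≠ 0). Then λ·F1(S,y1) + (1−λ)·F2(S,y1) = (0, 0). -/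

import Mathlib

/-- The pseudo-equilibrium: at the point `(S, y1)` on the switching line, the
Filippov convex combination `λ • F1 + (1-λ) • F2` vanishes, where `λ` is
determined by the vanishing of the `x`-component. -/
theorem stmt_12 (r1 k1 r2 k2 p b q1 q2 E e m S : ℝ)
    (hr1 : 0 < r1) (hk1 : 0 < k1) (hr2 : 0 < r2) (hk2 : 0 < k2)
    (hp : 0 < p) (hb : 0 < b) (hq1 : 0 < q1) (hq2 : 0 < q2)
    (hE : 0 < E) (he : 0 < e) (hm : m ∈ Set.Ioo (0 : ℝ) 1) (hS : 0 < S)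
    (hden : q2 * k1 * k2 * p * (1 - m) - q1 * k1 * r2 * (1 + b * (1 - m) * S) ≠ 0)
    (y1 : ℝ)
    (hy1 : y1 = (q2 * k2 * r1 * (k1 - S) * (1 + b * (1 - m) * S)
            - q1 * k1 * k2 * (r2 + (r2 * b + e * p) * (1 - m) * S))
          / (q2 * k1 * k2 * p * (1 - m) - q1 * k1 * r2 * (1 + b * (1 - m) * S)))
    (F1x F1y F2x F2y : ℝ)
    (hF1x : F1x = r1 * S * (1 - S / k1) - p * (1 - m) * S * y1 / (1 + b * (1 - m) * S))
    (hF1y : F1y = r2 * y1 * (1 - y1 / k2) + e * p * (1 - m) * S * y1 / (1 + b * (1 - m) * S))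
    (hF2x : F2x = F1x - q1 * E * S)
    (hF2y : F2y = F1y - q2 * E * y1)
    (hdiff : F2x - F1x ≠ 0)
    (lam : ℝ) (hlam : lam = F2x / (F2x - F1x)) :
    lam * F1x + (1 - lam) * F2x = 0 ∧ lam * F1y + (1 - lam) * F2y = 0 := by
  have hD : (1 + b * (1 - m) * S) ≠ 0 := by
    nlinarith [hm.2, mul_pos (mul_pos hb (by linarith [hm.2] : (0:ℝ) < 1 - m)) hS]
  constructor
  · rw [hlam]
    field_simp
    ring
  · have key : q1 * S * F1y = q2 * y1 * F1x := by
      have hy : y1 * (q2 * k1 * k2 * p * (1 - m) - q1 * k1 * r2 * (1 + b * (1 - m) * S)) = (q2 * k2 * r1 * (k1 - S) * (1 + b * (1 - m) * S)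
                - q1 * k1 * k2 * (r2 + (r2 * b + e * p) * (1 - m) * S)) := by
        rw [hy1, div_mul_cancel₀ _ hden]
      have e1 : S / k1 * k1 = S := div_mul_cancel₀ _ hk1.ne'
      have e2 : p * (1 - m) * S * y1 / (1 + b * (1 - m) * S) * (1 + b * (1 - m) * S) = p * (1 - m) * S * y1 := div_mul_cancel₀ _ hD
      have e3 : y1 / k2 * k2 = y1 := div_mul_cancel₀ _ hk2.ne'
      have e4 : e * p * (1 - m) * S * y1 / (1 + b * (1 - m) * S) * (1 + b * (1 - m) * S) = e * p * (1 - m) * S * y1 := div_mul_cancel₀ _ hD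
      have hK : k1 * k2 * (1 + b * (1 - m) * S) ≠ 0 := mul_ne_zero (mul_ne_zero hk1.ne' hk2.ne') hD
      apply mul_left_cancel₀ hK
      rw [hF1x, hF1y]
      linear_combination (-(q1 * S * k1 * r2 * y1 * (1 + b * (1 - m) * S))) * e3 + (q1 * S * k1 * k2) * e4 + (q2 * y1 * k2 * r1 * S * (1 + b * (1 - m) * S)) * e1 + (q2 * y1 * k1 * k2) * e2 + (S * y1) * hy
    have hqES : q1 * E * S ≠ 0 := by positivity
    have hdiff' : F2x - F1x = -(q1 * E * S) := by rw [hF2x]; ring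
    rw [hlam, hF2y, hdiff', hF2x]
    field_simp
    linear_combination E * key
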